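/- Let n ≥ 1 and let (A_1, …, A_{2n}) be a Clifford system on ℝ^m. Then for all x ∈ ℝ^m: Δq(x) = 16 n ‖x‖², where q(x) = Σ_{i=1}^{2n} ⟨x,A_ix⟩². -/

import Mathlib

open RealInnerProductSpace

/-- The quadratic form `P(x) = ⟨x, A x⟩` associated to an `m × m` real matrix `A`. -/
noncomputable def quadForm {m : ℕ} (A : Matrix (Fin m) (Fin m) ℝ)
    (x : EuclideanSpace ℝ (Fin m)) : ℝ :=
  ⟪x, Matrix.toEuclideanLin A x⟫

/-- A Clifford system on `ℝ^m`. -/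
def IsCliffordSystem {m N : ℕ} (A : Fin N → Matrix (Fin m) (Fin m) ℝ) : Prop :=
  (∀ i, (A i).IsSymm) ∧
    ∀ i j, A i * A j + A j * A i
      = (if i = j then (2 : ℝ) else 0) • (1 : Matrix (Fin m) (Fin m) ℝ)

/-- For a Clifford system `(A_1, …, A_{2n})` on `ℝ^m`, the degree-4 polynomial
`u(x) = Σ_{i=1}^n ⟨x, A_i x⟩² − Σ_{i=1}^n ⟨x, A_{n+i} x⟩²`. -/
noncomputable def cliffU {m n : ℕ} (A : Fin (n + n) → Matrix (Fin m) (Fin m) ℝ)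
    (x : EuclideanSpace ℝ (Fin m)) : ℝ :=
  ∑ i : Fin n, (quadForm (A (Fin.castAdd n i)) x) ^ 2
    - ∑ i : Fin n, (quadForm (A (Fin.natAdd n i)) x) ^ 2

/-- For a Clifford system `(A_1, …, A_{2n})` on `ℝ^m`, the degree-4 polynomial
`q(x) = Σ_{i=1}^{2n} ⟨x, A_i x⟩² = ‖P(x)‖²`. -/
noncomputable def cliffQ {m n : ℕ} (A : Fin (n + n) → Matrix (Fin m) (Fin m) ℝ)
    (x : EuclideanSpace ℝ (Fin m)) : ℝ :=
  ∑ i : Fin (n + n), (quadForm (A i) x) ^ 2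

/-- The Euclidean Laplacian `Δf(x) = Σ_i ∂²f/∂x_i²(x)` on `ℝ^m`. -/
noncomputable def laplacian {m : ℕ} (f : EuclideanSpace ℝ (Fin m) → ℝ)
    (x : EuclideanSpace ℝ (Fin m)) : ℝ :=
  ∑ i, fderiv ℝ (fun y => fderiv ℝ f y (EuclideanSpace.single i 1)) x
    (EuclideanSpace.single i 1)



open RealInnerProductSpace

lemma clifford_sq_one {m N : ℕ} {A : Fin N → Matrix (Fin m) (Fin m) ℝ}
    (hA : IsCliffordSystem A) (j : Fin N) : A j * A j = 1 := by
  have h2 := hA.2 j j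
  rw [if_pos rfl] at h2
  have h3 : A j * A j = (2 : ℝ)⁻¹ • (A j * A j + A j * A j) := by module
  rw [h3, h2, smul_smul]
  norm_num

lemma clifford_trace_zero {m N : ℕ} {A : Fin N → Matrix (Fin m) (Fin m) ℝ}
    (hA : IsCliffordSystem A) (i j : Fin N) (hij : i ≠ j) : (A i).trace = 0 := by
  have h0 := hA.2 i j
  rw [if_neg hij, zero_smul] at h0
  have hji : A j * A i = -(A i * A j) := eq_neg_of_add_eq_zero_right h0
  have h1 : A j * A j = 1 := clifford_sq_one hA j
  have key : (A i).trace = -(A i).trace := by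
    calc (A i).trace = (A i * A j * A j).trace := by rw [mul_assoc, h1, mul_one]
    _ = (A j * (A i * A j)).trace := by rw [Matrix.trace_mul_comm]
    _ = ((A j * A i) * A j).trace := by rw [mul_assoc]
    _ = (-(A i * A j) * A j).trace := by rw [hji]
    _ = -((A i * A j * A j).trace) := by rw [neg_mul, Matrix.trace_neg]
    _ = -(A i).trace := by rw [mul_assoc, h1, mul_one]
  linarith

section LapAux

variable {m : ℕ}

local notation "E" => EuclideanSpace ℝ (Fin m)

lemma diff_quad' (T : E →L[ℝ] E) : Differentiable ℝ fun y : E => (⟪y, T y⟫ : ℝ) :=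
  differentiable_id.inner ℝ T.differentiable

lemma fderiv_quad' (T : E →L[ℝ] E) (x v : E) :
    fderiv ℝ (fun y => (⟪y, T y⟫ : ℝ)) x v = ⟪x, T v⟫ + ⟪v, T x⟫ := by
  rw [fderiv_inner_apply ℝ (f := fun y : E => y) differentiableAt_id T.differentiableAt]
  simp only [ContinuousLinearMap.fderiv, fderiv_id']
  rfl

lemma diff_quad_sq' (T : E →L[ℝ] E) : Differentiable ℝ fun y : E => (⟪y, T y⟫ : ℝ) ^ 2 :=
  (diff_quad' T).pow 2

lemma fderiv_quad_sq' (T : E →L[ℝ] E) (x e : E) :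
    fderiv ℝ (fun y => (⟪y, T y⟫ : ℝ) ^ 2) x e
      = 2 * ⟪x, T x⟫ * (⟪x, T e⟫ + ⟪e, T x⟫) := by
  have h : (fun y : E => (⟪y, T y⟫ : ℝ) ^ 2) = fun y => (⟪y, T y⟫ : ℝ) * ⟪y, T y⟫ := by
    funext y; ring
  rw [h, fderiv_fun_mul (diff_quad' T x) (diff_quad' T x)]
  simp only [ContinuousLinearMap.add_apply, ContinuousLinearMap.smul_apply, smul_eq_mul,
    fderiv_quad']
  ring

lemma diff_phi' (T : E →L[ℝ] E) (e : E) :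
    Differentiable ℝ (fun y : E => 2 * ⟪y, T y⟫ * (⟪y, T e⟫ + ⟪e, T y⟫)) :=
  (((diff_quad' T).const_mul 2).mul
    ((differentiable_id.inner ℝ (differentiable_const (T e))).add
      ((differentiable_const e).inner ℝ T.differentiable)))

lemma fderiv_phi' (T : E →L[ℝ] E) (x e : E) :
    fderiv ℝ (fun y : E => 2 * ⟪y, T y⟫ * (⟪y, T e⟫ + ⟪e, T y⟫)) x e
      = 2 * (⟪x, T e⟫ + ⟪e, T x⟫) ^ 2 + 4 * ⟪x, T x⟫ * ⟪e, T e⟫ := by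
  have d1 : DifferentiableAt ℝ (fun y : E => 2 * ⟪y, T y⟫) x :=
    ((diff_quad' T).const_mul 2) x
  have da : DifferentiableAt ℝ (fun y : E => (⟪y, T e⟫ : ℝ)) x :=
    (differentiable_id.inner ℝ (differentiable_const (T e))) x
  have db : DifferentiableAt ℝ (fun y : E => (⟪e, T y⟫ : ℝ)) x :=
    ((differentiable_const e).inner ℝ T.differentiable) x
  have d2 : DifferentiableAt ℝ (fun y : E => (⟪y, T e⟫ : ℝ) + ⟪e, T y⟫) x := da.add db
  rw [fderiv_fun_mul d1 d2]
  have h1 : fderiv ℝ (fun y : E => 2 * ⟪y, T y⟫) x e = 2 * (⟪x, T e⟫ + ⟪e, T x⟫) := by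
    rw [fderiv_const_mul (diff_quad' T x)]
    simp only [ContinuousLinearMap.smul_apply, smul_eq_mul, fderiv_quad']
  have ha : fderiv ℝ (fun y : E => (⟪y, T e⟫ : ℝ)) x e = ⟪e, T e⟫ := by
    rw [fderiv_inner_apply ℝ (f := fun y : E => y) differentiableAt_id (differentiableAt_const (T e))]
    simp only [fderiv_const, Pi.zero_apply, ContinuousLinearMap.zero_apply, inner_zero_right,
      ContinuousLinearMap.fderiv, fderiv_id', zero_add]
    simp
  have hb : fderiv ℝ (fun y : E => (⟪e, T y⟫ : ℝ)) x e = ⟪e, T e⟫ := by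
    rw [fderiv_inner_apply ℝ (differentiableAt_const e) T.differentiableAt]
    simp only [fderiv_const, Pi.zero_apply, ContinuousLinearMap.zero_apply, inner_zero_left,
      ContinuousLinearMap.fderiv, add_zero]
    simp
  have h2 : fderiv ℝ (fun y : E => (⟪y, T e⟫ : ℝ) + ⟪e, T y⟫) x e = ⟪e, T e⟫ + ⟪e, T e⟫ := by
    rw [fderiv_fun_add da db]
    simp only [ContinuousLinearMap.add_apply, ha, hb]
  simp only [ContinuousLinearMap.add_apply, ContinuousLinearMap.smul_apply, smul_eq_mul, h1, h2]
  ring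

lemma per_index' (T : E →L[ℝ] E)
    (hsymm : ∀ a b : E, (⟪T a, b⟫ : ℝ) = ⟪a, T b⟫)
    (hTT : ∀ a : E, T (T a) = a)
    (htr : ∑ j : Fin m,
      (⟪EuclideanSpace.single j (1 : ℝ), T (EuclideanSpace.single j 1)⟫ : ℝ) = 0)
    (x : E) :
    ∑ j : Fin m, (2 * ((⟪x, T (EuclideanSpace.single j 1)⟫ : ℝ)
        + ⟪EuclideanSpace.single j 1, T x⟫) ^ 2
      + 4 * ⟪x, T x⟫ * ⟪EuclideanSpace.single j 1, T (EuclideanSpace.single j 1)⟫)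
      = 8 * ‖x‖ ^ 2 := by
  have hxe : ∀ j : Fin m, (⟪x, T (EuclideanSpace.single j 1)⟫ : ℝ)
      = ⟪EuclideanSpace.single j (1 : ℝ), T x⟫ := fun j => by
    rw [← hsymm, real_inner_comm]
  have hval : ∀ j : Fin m, (⟪EuclideanSpace.single j (1 : ℝ), T x⟫ : ℝ) = T x j := fun j => by
    rw [EuclideanSpace.inner_single_left]; simp
  rw [Finset.sum_add_distrib]
  have h2 : ∑ j : Fin m,
      4 * (⟪x, T x⟫ : ℝ) * ⟪EuclideanSpace.single j (1:ℝ), T (EuclideanSpace.single j 1)⟫ = 0 := by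
    rw [← Finset.mul_sum, htr, mul_zero]
  have hnorm : (⟪T x, T x⟫ : ℝ) = ‖x‖ ^ 2 := by
    rw [hsymm x (T x), hTT, real_inner_self_eq_norm_sq]
  have hip : (⟪T x, T x⟫ : ℝ) = ∑ j : Fin m, T x j * T x j := by
    simp [PiLp.inner_apply, RCLike.inner_apply]
    rw [EuclideanSpace.real_norm_sq_eq]; simp [sq]
  have h1 : ∑ j : Fin m, 2 * ((⟪x, T (EuclideanSpace.single j 1)⟫ : ℝ)
      + ⟪EuclideanSpace.single j 1, T x⟫) ^ 2 = 8 * ‖x‖ ^ 2 := by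
    have : ∀ j : Fin m, 2 * ((⟪x, T (EuclideanSpace.single j 1)⟫ : ℝ)
        + ⟪EuclideanSpace.single j 1, T x⟫) ^ 2 = 8 * (T x j * T x j) := by
      intro j; rw [hxe, hval]; ring
    rw [Finset.sum_congr rfl fun j _ => this j, ← Finset.mul_sum, ← hip, hnorm]
  rw [h1, h2, add_zero]

end LapAux


/-- For a Clifford system `(A_1, …, A_{2n})` on `ℝ^m` (`n ≥ 1`):
`Δq(x) = 16 n ‖x‖²` for all `x ∈ ℝ^m`. -/
theorem laplacian_q {m n : ℕ} (hn : 1 ≤ n)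
    (A : Fin (n + n) → Matrix (Fin m) (Fin m) ℝ) (hA : IsCliffordSystem A) :
    ∀ x : EuclideanSpace ℝ (Fin m), laplacian (cliffQ A) x = 16 * n * ‖x‖ ^ 2 := by
  intro x
  classical
  set T : Fin (n + n) → EuclideanSpace ℝ (Fin m) →L[ℝ] EuclideanSpace ℝ (Fin m) :=
    fun i => LinearMap.toContinuousLinearMap (Matrix.toEuclideanLin (A i)) with hTdef
  have hTapp : ∀ i (y : EuclideanSpace ℝ (Fin m)), T i y = Matrix.toEuclideanLin (A i) y :=
    fun _ _ => rfl
  have hcq : cliffQ A = fun y => ∑ i : Fin (n + n), (⟪y, T i y⟫ : ℝ) ^ 2 := rfl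
  have hherm : ∀ i, (A i).IsHermitian := by
    intro i; ext a b
    simpa [Matrix.conjTranspose_apply] using (hA.1 i).apply a b
  have hsymm : ∀ i (a b : EuclideanSpace ℝ (Fin m)), (⟪T i a, b⟫ : ℝ) = ⟪a, T i b⟫ :=
    fun i a b => (Matrix.isHermitian_iff_isSymmetric.1 (hherm i)) a b
  have hTT : ∀ i (a : EuclideanSpace ℝ (Fin m)), T i (T i a) = a := by
    intro i a
    have h1 : A i * A i = 1 := clifford_sq_one hA i
    show Matrix.toEuclideanLin (A i) (Matrix.toEuclideanLin (A i) a) = a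
    simp [Matrix.toEuclideanLin_apply, Matrix.mulVec_mulVec, h1]
  have htr : ∀ i, ∑ j : Fin m,
      (⟪EuclideanSpace.single j (1 : ℝ), T i (EuclideanSpace.single j 1)⟫ : ℝ) = 0 := by
    intro i
    have hval : ∀ j : Fin m,
        (⟪EuclideanSpace.single j (1 : ℝ), T i (EuclideanSpace.single j 1)⟫ : ℝ) = A i j j := by
      intro j
      rw [EuclideanSpace.inner_single_left, hTapp, Matrix.toEuclideanLin_apply]
      simp only [PiLp.ofLp_single, EuclideanSpace.single, Equiv.apply_symm_apply,
        Matrix.mulVec_single, map_one, one_mul, mul_one]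
      simp [Matrix.col_apply]
    rw [Finset.sum_congr rfl fun j _ => hval j]
    have hex : ∃ k : Fin (n + n), k ≠ i := by
      have : Nontrivial (Fin (n + n)) := Fin.nontrivial_iff_two_le.2 (by omega)
      exact exists_ne i
    obtain ⟨k, hk⟩ := hex
    have h0 := clifford_trace_zero hA i k (Ne.symm hk)
    simpa [Matrix.trace, Matrix.diag] using h0
  have step1 : ∀ j : Fin m, (fun y => fderiv ℝ (cliffQ A) y (EuclideanSpace.single j 1))
      = fun y => ∑ i : Fin (n + n), 2 * (⟪y, T i y⟫ : ℝ)
          * (⟪y, T i (EuclideanSpace.single j 1)⟫ + ⟪EuclideanSpace.single j 1, T i y⟫) := by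
    intro j; funext y
    rw [hcq, fderiv_fun_sum (fun i _ => diff_quad_sq' (T i) y), ContinuousLinearMap.sum_apply]
    exact Finset.sum_congr rfl fun i _ => fderiv_quad_sq' (T i) y _
  have main : ∀ j : Fin m,
      fderiv ℝ (fun y => fderiv ℝ (cliffQ A) y (EuclideanSpace.single j 1)) x
        (EuclideanSpace.single j 1)
      = ∑ i : Fin (n + n), (2 * ((⟪x, T i (EuclideanSpace.single j 1)⟫ : ℝ)
            + ⟪EuclideanSpace.single j 1, T i x⟫) ^ 2
          + 4 * ⟪x, T i x⟫ * ⟪EuclideanSpace.single j 1, T i (EuclideanSpace.single j 1)⟫) := by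
    intro j
    rw [step1 j, fderiv_fun_sum (fun i _ => diff_phi' (T i) (EuclideanSpace.single j 1) x),
      ContinuousLinearMap.sum_apply]
    exact Finset.sum_congr rfl fun i _ => fderiv_phi' (T i) x _
  unfold laplacian
  rw [Finset.sum_congr rfl fun j _ => main j, Finset.sum_comm,
    Finset.sum_congr rfl fun i _ => per_index' (T i) (hsymm i) (hTT i) (htr i) x]
  simp only [Finset.sum_const, Finset.card_univ, Fintype.card_fin, nsmul_eq_mul]
  push_cast
  ring
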